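/- The 2×2×2 quaternion tensor T whose two frontal slices are the identity matrix [[1,0],[0,1]] and the matrix [[0,1],[0,0]] does not have rank at most 2; that is, T cannot be written as a sum of 2 simple tensors over ℍ (hence, combined with the bound rank ≤ 3 for all 2×2×2 quaternion tensors, T has rank exactly 3). -/

import Mathlib

/-- An `n₁ × n₂ × n₃` quaternion tensor has rank at most `r` if it is a sum of
`r` simple tensors. -/
def HasRankLE {n₁ n₂ n₃ : ℕ} (r : ℕ) (T : Fin n₁ → Fin n₂ → Fin n₃ → Quaternion ℝ) : Prop :=
  ∃ (a : Fin r → Fin n₁ → Quaternion ℝ) (b : Fin r → Fin n₂ → Quaternion ℝ)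
    (c : Fin r → Fin n₃ → Quaternion ℝ),
    ∀ i j k, T i j k = ∑ l : Fin r, a l i * b l j * c l k

private lemma quat_matrix_mul_eq_one_comm {A B : Matrix (Fin 2) (Fin 2) (Quaternion ℝ)}
    (h : A * B = 1) : B * A = 1 := by
  have h1 : LinearMap.mulLeft ℝ A * LinearMap.mulLeft ℝ B = 1 := by
    refine LinearMap.ext fun x => ?_
    simp [Module.End.mul_apply, LinearMap.mulLeft_apply, ← Matrix.mul_assoc, h]
  have h2 := mul_eq_one_comm.mp h1
  have h3 := congrArg (fun f => f (1 : Matrix (Fin 2) (Fin 2) (Quaternion ℝ))) h2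
  simpa using h3

private lemma cancel_aux {x y z : Quaternion ℝ} (hy : y ≠ 0) :
    (x * y) * (y⁻¹ * z) = x * z := by
  rw [mul_assoc, ← mul_assoc y, mul_inv_cancel₀ hy, one_mul]

theorem not_rank_le_two_222 (T : Fin 2 → Fin 2 → Fin 2 → Quaternion ℝ)
    (hT : ∀ i j k, T i j k =
      if j = 0 then (1 : Matrix (Fin 2) (Fin 2) (Quaternion ℝ)) i k
      else !![(0 : Quaternion ℝ), 1; 0, 0] i k) :
    ¬ HasRankLE 2 T := by
  rintro ⟨a, b, c, h⟩
  have key : ∀ i j k, (∑ l : Fin 2, a l i * b l j * c l k) =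
      if j = 0 then (1 : Matrix (Fin 2) (Fin 2) (Quaternion ℝ)) i k
      else !![(0 : Quaternion ℝ), 1; 0, 0] i k := fun i j k => (h i j k).symm.trans (hT i j k)
  -- the eight scalar equations
  have eq1 := key 0 0 0
  have eq2 := key 0 0 1
  have eq3 := key 1 0 0
  have eq4 := key 1 0 1
  have eq5 := key 0 1 0
  have eq6 := key 0 1 1
  have eq7 := key 1 1 0
  have eq8 := key 1 1 1
  simp [Fin.sum_univ_two, Matrix.one_apply] at eq1 eq2 eq3 eq4 eq5 eq6 eq7 eq8
  set U : Matrix (Fin 2) (Fin 2) (Quaternion ℝ) :=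
    !![a 0 0 * b 0 0, a 1 0 * b 1 0; a 0 1 * b 0 0, a 1 1 * b 1 0] with hU
  set V : Matrix (Fin 2) (Fin 2) (Quaternion ℝ) :=
    !![c 0 0, c 0 1; c 1 0, c 1 1] with hV
  have hUV : U * V = 1 := by
    refine Matrix.ext fun i k => ?_
    fin_cases i <;> fin_cases k <;>
      simp [hU, hV, Matrix.mul_apply, Fin.sum_univ_two, Matrix.one_apply, eq1, eq2, eq3, eq4]
  have hVU : V * U = 1 := quat_matrix_mul_eq_one_comm hUV
  -- b 0 0 and b 1 0 are nonzero
  have hb00 : b 0 0 ≠ 0 := by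
    intro h0
    have h1 := congrFun (congrFun hVU 0) 0
    simp [hU, hV, Matrix.mul_apply, Fin.sum_univ_two, Matrix.one_apply, h0] at h1
  have hb10 : b 1 0 ≠ 0 := by
    intro h0
    have h1 := congrFun (congrFun hVU 1) 1
    simp [hU, hV, Matrix.mul_apply, Fin.sum_univ_two, Matrix.one_apply, h0] at h1
  set D : Matrix (Fin 2) (Fin 2) (Quaternion ℝ) :=
    !![(b 0 0)⁻¹ * b 0 1, 0; 0, (b 1 0)⁻¹ * b 1 1] with hD
  set E : Matrix (Fin 2) (Fin 2) (Quaternion ℝ) := !![0, 1; 0, 0] with hE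
  have hUDV : U * D * V = E := by
    refine Matrix.ext fun i k => ?_
    fin_cases i <;> fin_cases k <;>
      simp [hU, hD, hV, hE, Matrix.mul_apply, Fin.sum_univ_two, cancel_aux hb00,
        cancel_aux hb10, eq5, eq6, eq7, eq8]
  have hEE : E * E = 0 := by
    refine Matrix.ext fun i k => ?_
    fin_cases i <;> fin_cases k <;> simp [hE, Matrix.mul_apply, Fin.sum_univ_two]
  have hUDDV : U * (D * D) * V = 0 := by
    have : U * (D * D) * V = (U * D * V) * (U * D * V) := by
      rw [show (U * D * V) * (U * D * V) = U * D * ((V * U) * (D * V)) by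
        simp only [Matrix.mul_assoc], hVU, one_mul]
      simp only [Matrix.mul_assoc]
    rw [this, hUDV, hEE]
  have hDD : D * D = 0 := by
    have : D * D = V * (U * (D * D) * V) * U := by
      rw [show V * (U * (D * D) * V) * U = (V * U) * (D * D) * (V * U) by
        simp only [Matrix.mul_assoc], hVU, one_mul, mul_one]
    rw [this, hUDDV]
    simp
  have hb01 : b 0 1 = 0 := by
    have h1 := congrFun (congrFun hDD 0) 0
    simp [hD, Matrix.mul_apply, Fin.sum_univ_two] at h1
    exact h1.resolve_left hb00
  have hb11 : b 1 1 = 0 := by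
    have h1 := congrFun (congrFun hDD 1) 1
    simp [hD, Matrix.mul_apply, Fin.sum_univ_two] at h1
    exact h1.resolve_left hb10
  rw [hb01, hb11] at eq6
  simp at eq6
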